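/- Let I be a finite index set with a distinguished element 0, and let S be a unitary, symmetric complex matrix indexed by I whose 0-column entries S_{λ,0} are real and strictly positive. Assume that all Verlinde numbers N_{λ,μ}^ν := Σ_{ρ∈I} S_{λ,ρ} S_{μ,ρ} conj(S_{ν,ρ}) / S_{0,ρ} are non-negative real numbers. Then for all λ, μ ∈ I one has |S_{λ,μ}| ≤ S_{λ,0}·S_{μ,0}/S_{0,0}; equivalently, |S_{λ,μ}/S_{0,μ}| ≤ d_λ where d_λ = S_{λ,0}/S_{0,0}. -/

import Mathlib

open scoped ComplexConjugate

private lemma realCast_aux (z : ℂ) (h : z.im = 0) : z = (z.re : ℂ) := by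
  have := Complex.re_add_im z
  rw [h] at this
  simpa using this.symm

/-- If `S` is unitary and symmetric with real strictly positive
`i0`-column, and all Verlinde numbers `N λ μ ν = Σ_ρ S λ ρ * S μ ρ * conj (S ν ρ) / S i0 ρ`
are non-negative reals, then `|S λ μ| ≤ S λ i0 · S μ i0 / S i0 i0`. -/
theorem S_matrix_entry_bound
    {I : Type*} [Fintype I] [DecidableEq I] (i0 : I)
    (S : Matrix I I ℂ) (hS : S ∈ Matrix.unitaryGroup I ℂ)
    (hsymm : S.transpose = S)
    (hreal : ∀ lam : I, (S lam i0).im = 0)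
    (hpos : ∀ lam : I, 0 < (S lam i0).re)
    (hNnn : ∀ lam mu nu : I,
      ((∑ rho : I, S lam rho * S mu rho * conj (S nu rho) / S i0 rho).im = 0 ∧
        0 ≤ (∑ rho : I, S lam rho * S mu rho * conj (S nu rho) / S i0 rho).re)) :
    ∀ lam mu : I, ‖S lam mu‖ ≤ (S lam i0).re * (S mu i0).re / (S i0 i0).re := by
  intro lam mu
  have hsym : ∀ a b, S a b = S b a := fun a b => by
    conv_lhs => rw [← hsymm, Matrix.transpose_apply]
  have hcast : ∀ n : I, S n i0 = ((S n i0).re : ℂ) := fun n => realCast_aux _ (hreal n)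
  have hconj0 : ∀ m : I, conj (S m i0) = S m i0 := fun m =>
    Complex.conj_eq_iff_im.mpr (hreal m)
  have hU : star S * S = 1 := hS.1
  have horth : ∀ a b : I, ∑ m : I, conj (S m a) * S m b = if a = b then (1:ℂ) else 0 := by
    intro a b
    have h : (star S * S) a b = (1 : Matrix I I ℂ) a b := by rw [hU]
    simpa [Matrix.mul_apply, Matrix.conjTranspose_apply, Matrix.one_apply,
      Matrix.star_eq_conjTranspose] using h
  set N : I → I → ℂ := fun m n => ∑ rho : I, S lam rho * S m rho * conj (S n rho) / S i0 rho
    with hNdef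
  have hNim : ∀ m n : I, (N m n).im = 0 := fun m n => (hNnn lam m n).1
  have hNre : ∀ m n : I, 0 ≤ (N m n).re := fun m n => (hNnn lam m n).2
  have hNcast : ∀ m n : I, N m n = ((N m n).re : ℂ) := fun m n => realCast_aux _ (hNim m n)
  -- right eigenvector identity
  have hright : ∀ m : I, ∑ n : I, N m n * S n mu = S lam mu * S m mu / S i0 mu := by
    intro m
    have h1 : ∀ n : I, N m n * S n mu
        = ∑ rho : I, (S lam rho * S m rho / S i0 rho) * (conj (S n rho) * S n mu) := by
      intro n
      rw [hNdef]
      rw [Finset.sum_mul]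
      exact Finset.sum_congr rfl fun rho _ => by ring
    simp_rw [h1]
    rw [Finset.sum_comm]
    have h2 : ∀ rho : I,
        ∑ n : I, (S lam rho * S m rho / S i0 rho) * (conj (S n rho) * S n mu)
        = (S lam rho * S m rho / S i0 rho) * (if rho = mu then 1 else 0) := by
      intro rho
      rw [← Finset.mul_sum, horth rho mu]
    simp_rw [h2]
    simp
  -- left eigenvector identity
  have hleft : ∀ n : I, ∑ m : I, S m i0 * N m n = S lam i0 * S n i0 / S i0 i0 := by
    intro n
    have h1 : ∀ m : I, S m i0 * N m n
        = ∑ rho : I, (S lam rho * conj (S n rho) / S i0 rho) * (conj (S m i0) * S m rho) := by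
      intro m
      rw [hNdef, hconj0 m, Finset.mul_sum]
      exact Finset.sum_congr rfl fun rho _ => by ring
    simp_rw [h1]
    rw [Finset.sum_comm]
    have h2 : ∀ rho : I,
        ∑ m : I, (S lam rho * conj (S n rho) / S i0 rho) * (conj (S m i0) * S m rho)
        = (S lam rho * conj (S n rho) / S i0 rho) * (if i0 = rho then 1 else 0) := by
      intro rho
      rw [← Finset.mul_sum, horth i0 rho]
    simp_rw [h2]
    simp [hconj0 n]
  -- real version of the left eigenvector identity
  have hleftRe : ∀ n : I, ∑ m : I, (S m i0).re * (N m n).re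
      = (S lam i0).re / (S i0 i0).re * (S n i0).re := by
    intro n
    have key : ((∑ m : I, (S m i0).re * (N m n).re : ℝ) : ℂ)
        = (((S lam i0).re / (S i0 i0).re * (S n i0).re : ℝ) : ℂ) := by
      push_cast
      calc (∑ m : I, ((S m i0).re : ℂ) * ((N m n).re : ℂ))
          = ∑ m : I, S m i0 * N m n :=
            Finset.sum_congr rfl fun m _ => by rw [← hcast m, ← hNcast m n]
        _ = S lam i0 * S n i0 / S i0 i0 := hleft n
        _ = ((S lam i0).re : ℂ) / ((S i0 i0).re : ℂ) * ((S n i0).re : ℂ) := by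
            rw [hcast lam, hcast n, hcast i0]; simp only [Complex.ofReal_re]; ring
    exact_mod_cast key
  -- pointwise triangle inequality step
  have hstep : ∀ m : I, ‖S lam mu / S i0 mu‖ * ‖S m mu‖
      ≤ ∑ n : I, (N m n).re * ‖S n mu‖ := by
    intro m
    have h1 : ‖S lam mu / S i0 mu‖ * ‖S m mu‖
        = ‖∑ n : I, N m n * S n mu‖ := by
      rw [hright m, ← norm_mul]
      congr 1
      ring
    rw [h1]
    calc ‖∑ n : I, N m n * S n mu‖
        ≤ ∑ n : I, ‖N m n * S n mu‖ := norm_sum_le _ _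
      _ = ∑ n : I, (N m n).re * ‖S n mu‖ := by
          refine Finset.sum_congr rfl fun n _ => ?_
          rw [norm_mul]
          have : ‖N m n‖ = (N m n).re := by
            nth_rewrite 1 [hNcast m n]
            rw [Complex.norm_real, Real.norm_eq_abs]
            exact abs_of_nonneg (hNre m n)
          rw [this]
  set T : ℝ := ∑ m : I, (S m i0).re * ‖S m mu‖ with hT
  have hmain : ‖S lam mu / S i0 mu‖ * T ≤ ((S lam i0).re / (S i0 i0).re) * T := by
    rw [hT, Finset.mul_sum, Finset.mul_sum]
    calc ∑ m : I, ‖S lam mu / S i0 mu‖ * ((S m i0).re * ‖S m mu‖)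
        ≤ ∑ m : I, (S m i0).re * ∑ n : I, (N m n).re * ‖S n mu‖ := by
          refine Finset.sum_le_sum fun m _ => ?_
          have h2 := mul_le_mul_of_nonneg_left (hstep m) (hpos m).le
          calc ‖S lam mu / S i0 mu‖ * ((S m i0).re * ‖S m mu‖)
              = (S m i0).re * (‖S lam mu / S i0 mu‖ * ‖S m mu‖) := by
                ring
            _ ≤ (S m i0).re * ∑ n : I, (N m n).re * ‖S n mu‖ := h2
      _ = ∑ m : I, ∑ n : I, (S m i0).re * (N m n).re * ‖S n mu‖ := by
          refine Finset.sum_congr rfl fun m _ => ?_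
          rw [Finset.mul_sum]
          exact Finset.sum_congr rfl fun n _ => by ring
      _ = ∑ n : I, ∑ m : I, (S m i0).re * (N m n).re * ‖S n mu‖ :=
          Finset.sum_comm
      _ = ∑ n : I, (∑ m : I, (S m i0).re * (N m n).re) * ‖S n mu‖ := by
          refine Finset.sum_congr rfl fun n _ => ?_
          rw [Finset.sum_mul]
      _ = ∑ n : I, ((S lam i0).re / (S i0 i0).re) * ((S n i0).re * ‖S n mu‖) := by
          refine Finset.sum_congr rfl fun n _ => ?_
          rw [hleftRe n]
          ring
  have hTpos : 0 < T := by
    obtain ⟨m0, hm0⟩ : ∃ m : I, S m mu ≠ 0 := by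
      by_contra h
      push_neg at h
      have h0 := horth mu mu
      simp [h] at h0
    refine Finset.sum_pos' (fun m _ => mul_nonneg (hpos m).le (norm_nonneg _))
      ⟨m0, Finset.mem_univ _, ?_⟩
    exact mul_pos (hpos m0) (norm_pos_iff.mpr hm0)
  have hcle : ‖S lam mu / S i0 mu‖ ≤ (S lam i0).re / (S i0 i0).re :=
    (mul_le_mul_iff_left₀ hTpos).mp hmain
  have hSimu : S i0 mu = S mu i0 := hsym i0 mu
  have hne : S i0 mu ≠ 0 := by
    rw [hSimu]
    intro h
    simpa [h] using hpos mu
  have habs : ‖S lam mu‖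
      = ‖S lam mu / S i0 mu‖ * ‖S i0 mu‖ := by
    rw [norm_div, div_mul_cancel₀]
    exact norm_ne_zero_iff.mpr hne
  have habs0 : ‖S i0 mu‖ = (S mu i0).re := by
    rw [hSimu]
    nth_rewrite 1 [hcast mu]
    rw [Complex.norm_real, Real.norm_eq_abs]
    exact abs_of_pos (hpos mu)
  rw [habs, habs0]
  calc ‖S lam mu / S i0 mu‖ * (S mu i0).re
      ≤ ((S lam i0).re / (S i0 i0).re) * (S mu i0).re :=
        mul_le_mul_of_nonneg_right hcle (hpos mu).le
    _ = (S lam i0).re * (S mu i0).re / (S i0 i0).re := by ring
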